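/- For 0 ≤ n ≤ √(N+1) and all x ∈ [0,N], the discrete Chebyshev polynomial of the second kind satisfies |U_n(x,N)| ≤ 1. -/

import Mathlib

open Finset

noncomputable def poch (a : ℝ) (k : ℕ) : ℝ := ∏ i ∈ Finset.range k, (a + i)

noncomputable def hahnQ (n : ℕ) (x α β : ℝ) (N : ℕ) : ℝ :=
  ∑ k ∈ Finset.range (n + 1),
    poch (-(n : ℝ)) k * poch ((n : ℝ) + α + β + 1) k * poch (-x) k /
      ((Nat.factorial k : ℝ) * poch (α + 1) k * poch (-(N : ℝ)) k)

noncomputable def binomR (a b : ℝ) : ℝ :=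
  Real.Gamma (a + 1) / (Real.Gamma (b + 1) * Real.Gamma (a - b + 1))

noncomputable def hahnWeight (x : ℕ) (α β : ℝ) (N : ℕ) : ℝ :=
  binomR ((x : ℝ) + α) (x : ℝ) * binomR ((N : ℝ) - x + β) ((N : ℝ) - x) /
    binomR ((N : ℝ) + α + β + 1) (N : ℝ)

noncomputable def hahnPi (n : ℕ) (α β : ℝ) (N : ℕ) : ℝ :=
  ((-1 : ℝ) ^ n * poch (-(N : ℝ)) n * poch (α + 1) n * poch (α + β + 1) n) /
      ((Nat.factorial n : ℝ) * poch ((N : ℝ) + α + β + 2) n * poch (β + 1) n) *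
    ((2 * (n : ℝ) + α + β + 1) / (α + β + 1))

noncomputable def kraw (n : ℕ) (x p : ℝ) (N : ℕ) : ℝ :=
  ∑ k ∈ Finset.range (n + 1),
    poch (-(n : ℝ)) k * poch (-x) k / ((Nat.factorial k : ℝ) * poch (-(N : ℝ)) k) * (1 / p) ^ k

noncomputable def dualR (n : ℕ) (lam α β : ℝ) (N : ℕ) : ℝ :=
  ∑ k ∈ Finset.range (n + 1),
    poch (-(n : ℝ)) k * (∏ i ∈ Finset.range k, ((i : ℝ) * (α + β + 1 + i) - lam)) /
      ((Nat.factorial k : ℝ) * poch (α + 1) k * poch (-(N : ℝ)) k)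

noncomputable def ktil (l : ℕ) (x p : ℝ) (N : ℕ) : ℝ :=
  (N.choose l : ℝ) * (p / (1 - p)) ^ l * kraw l x p N

set_option maxHeartbeats 1000000

lemma poch_zero (a : ℝ) : poch a 0 = 1 := by simp [poch]

lemma poch_succ (a : ℝ) (k : ℕ) : poch a (k+1) = poch a k * (a + k) := by
  simp [poch, Finset.prod_range_succ]

lemma poch_succ' (a : ℝ) (k : ℕ) : poch a (k+1) = a * poch (a+1) k := by
  simp only [poch, Finset.prod_range_succ']
  rw [mul_comm]
  congr 1
  · norm_num
  · apply Finset.prod_congr rfl; intro i _; push_cast; ring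

lemma poch_nat_eq_zero {m k : ℕ} (h : m < k) : poch (-(m:ℝ)) k = 0 := by
  apply Finset.prod_eq_zero (Finset.mem_range.mpr h)
  simp

lemma poch_ne_zero_of_neg_nat {N k : ℕ} (h : k ≤ N) : poch (-(N:ℝ)) k ≠ 0 := by
  apply Finset.prod_ne_zero_iff.mpr
  intro i hi
  have hi' : i < N := lt_of_lt_of_le (Finset.mem_range.mp hi) h
  have : (i:ℝ) < (N:ℝ) := by exact_mod_cast hi'
  intro hzero
  nlinarith

lemma poch_pos {a : ℝ} (ha : 0 < a) (k : ℕ) : 0 < poch a k := by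
  apply Finset.prod_pos
  intro i _
  positivity

lemma poch_shift (b : ℝ) (k : ℕ) : (b+1) * poch (-b) k = poch (-(b+1)) k * ((b+1) - k) := by
  induction k with
  | zero => simp [poch_zero]
  | succ k ih =>
    rw [poch_succ, poch_succ]
    push_cast
    linear_combination ((k:ℝ) - b) * ih

/-- coefficient of `poch (-x) k` in the `α = β = 1/2` Hahn polynomial of degree `n`. -/
noncomputable def cc (N n k : ℕ) : ℝ :=
  poch (-(n:ℝ)) k * poch ((n:ℝ)+2) k /
    ((Nat.factorial k : ℝ) * poch (3/2) k * poch (-(N:ℝ)) k)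

lemma hahnQ_eq (n : ℕ) (x : ℝ) (N : ℕ) :
    hahnQ n x (1/2) (1/2) N = ∑ k ∈ Finset.range (n+1), cc N n k * poch (-x) k := by
  unfold hahnQ cc
  apply Finset.sum_congr rfl
  intro k _
  have h1 : (n : ℝ) + 1/2 + 1/2 + 1 = (n:ℝ) + 2 := by ring
  have h2 : (1:ℝ)/2 + 1 = 3/2 := by norm_num
  rw [h1, h2]
  ring

lemma cc_eq_zero {N n k : ℕ} (h : n < k) : cc N n k = 0 := by
  unfold cc
  rw [poch_nat_eq_zero h]
  simp

lemma hahnQ_eq_ext (n : ℕ) (x : ℝ) (N : ℕ) {M : ℕ} (h : n + 1 ≤ M) :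
    hahnQ n x (1/2) (1/2) N = ∑ k ∈ Finset.range M, cc N n k * poch (-x) k := by
  rw [hahnQ_eq]
  apply Finset.sum_subset (Finset.range_subset_range.mpr h)
  intro k _ hk
  have hk' : n < k := by
    by_contra hc
    exact hk (Finset.mem_range.mpr (Nat.lt_succ_of_le (le_of_not_gt hc)))
  rw [cc_eq_zero hk']
  simp

lemma key (N i j : ℕ) (hj : j + 1 ≤ N) :
    ((i:ℝ)+3)*((N:ℝ)-((i:ℝ)+1)) * cc N (i+2) (j+1)
      = 4*((i:ℝ)+2)*((((N:ℝ)/2 - ((j:ℝ)+1)) * cc N (i+1) (j+1)) + cc N (i+1) j)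
        - ((i:ℝ)+1)*((N:ℝ)+(i:ℝ)+3) * cc N i (j+1) := by
  set P := poch (-((i:ℝ)+1)) j with hP
  set R := poch ((i:ℝ)+3) j with hR
  set F := (Nat.factorial j : ℝ) with hF
  set G := poch (3/2) j with hG
  set H := poch (-(N:ℝ)) j with hH
  have hFne : F ≠ 0 := by positivity
  have hGpos : 0 < G := poch_pos (by norm_num) j
  have hGne : G ≠ 0 := ne_of_gt hGpos
  have hHne : H ≠ 0 := poch_ne_zero_of_neg_nat (le_trans (Nat.le_succ j) hj)
  have hjN : (j:ℝ) < (N:ℝ) := by exact_mod_cast hj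
  have hNj : -(N:ℝ) + (j:ℝ) ≠ 0 := by intro h; nlinarith
  -- numerator rewrites
  have n1 : poch (-((i+2:ℕ):ℝ)) (j+1) = -((i:ℝ)+2) * P := by
    push_cast
    rw [show (-((i:ℝ)+2)) = (-((i:ℝ)+2)) from rfl, poch_succ']
    rw [hP, show (-((i:ℝ)+2)+1) = -((i:ℝ)+1) by ring]
  have n2 : ((i:ℝ)+3) * poch (((i+2:ℕ):ℝ)+2) (j+1) = R * ((i:ℝ)+3+(j:ℝ)) * ((i:ℝ)+4+(j:ℝ)) := by
    push_cast
    have h1 : poch ((i:ℝ)+3) (j+2) = ((i:ℝ)+3) * poch ((i:ℝ)+4) (j+1) := by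
      rw [poch_succ' ((i:ℝ)+3) (j+1), show ((i:ℝ)+3+1) = (i:ℝ)+4 by ring]
    have h2 : poch ((i:ℝ)+3) (j+2) = R * (((i:ℝ)+3) + (j:ℝ)) * (((i:ℝ)+3) + ((j:ℝ)+1)) := by
      rw [show j+2 = (j+1)+1 from rfl, poch_succ, poch_succ, hR]
      push_cast; ring
    rw [show ((i:ℝ)+2+2) = (i:ℝ)+4 by ring, ← h1, h2]
    ring
  have n3 : poch (-((i+1:ℕ):ℝ)) (j+1) = P * (-((i:ℝ)+1) + (j:ℝ)) := by
    push_cast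
    rw [poch_succ, hP]
  have n4 : poch (((i+1:ℕ):ℝ)+2) (j+1) = R * ((i:ℝ)+3+(j:ℝ)) := by
    push_cast
    rw [show ((i:ℝ)+1+2) = (i:ℝ)+3 by ring, poch_succ, hR]
  have n5 : poch (-((i+1:ℕ):ℝ)) j = P := by push_cast; rw [hP]
  have n6 : poch (((i+1:ℕ):ℝ)+2) j = R := by
    push_cast; rw [show ((i:ℝ)+1+2) = (i:ℝ)+3 by ring, hR]
  have n7 : ((i:ℝ)+1) * poch (-(i:ℝ)) (j+1) = P * (-((i:ℝ)+1) + (j:ℝ)) * ((i:ℝ) - (j:ℝ)) := by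
    have := poch_shift (i:ℝ) (j+1)
    rw [this, show (-((i:ℝ)+1)) = -((i:ℝ)+1) from rfl, poch_succ, hP]
    push_cast; ring
  have n8 : poch ((i:ℝ)+2) (j+1) = ((i:ℝ)+2) * R := by
    rw [poch_succ', show ((i:ℝ)+2+1) = (i:ℝ)+3 by ring, hR]
  -- denominator rewrites
  have d1 : (Nat.factorial (j+1) : ℝ) = ((j:ℝ)+1) * F := by
    rw [Nat.factorial_succ]; push_cast [hF]; ring
  have d2 : poch (3/2) (j+1) = G * (3/2 + (j:ℝ)) := by rw [poch_succ, hG]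
  have d3 : poch (-(N:ℝ)) (j+1) = H * (-(N:ℝ) + (j:ℝ)) := by rw [poch_succ, hH]
  unfold cc
  rw [d1, d2, d3, n3, n4, n5, n6]
  rw [show poch (-((i+2:ℕ):ℝ)) (j+1) = -((i:ℝ)+2) * P from n1]
  rw [show poch (((i+2:ℕ):ℝ)+2) (j+1) = R * ((i:ℝ)+3+(j:ℝ)) * ((i:ℝ)+4+(j:ℝ)) / ((i:ℝ)+3) by
    field_simp at n2 ⊢; linarith [n2]]
  rw [show poch (-((i:ℕ):ℝ)) (j+1) = P * (-((i:ℝ)+1) + (j:ℝ)) * ((i:ℝ) - (j:ℝ)) / ((i:ℝ)+1) by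
    field_simp at n7 ⊢; linarith [n7]]
  rw [show poch (((i:ℕ):ℝ)+2) (j+1) = ((i:ℝ)+2) * R from n8]
  have hi1 : ((i:ℝ)+1) ≠ 0 := by positivity
  have hi3 : ((i:ℝ)+3) ≠ 0 := by positivity
  have hj1 : ((j:ℝ)+1) ≠ 0 := by positivity
  have h32 : (3/2 + (j:ℝ)) ≠ 0 := by positivity
  rw [← hF, ← hG, ← hH]
  field_simp
  ring

lemma cc_zero (N n : ℕ) : cc N n 0 = 1 := by
  simp [cc, poch_zero]

lemma hahn_rec (N l : ℕ) (x : ℝ) (h : l + 3 ≤ N) :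
    ((l:ℝ)+3)*((N:ℝ)-((l:ℝ)+1)) * hahnQ (l+2) x (1/2) (1/2) N
      = 4*((l:ℝ)+2)*((N:ℝ)/2 - x) * hahnQ (l+1) x (1/2) (1/2) N
        - ((l:ℝ)+1)*((N:ℝ)+(l:ℝ)+3) * hahnQ l x (1/2) (1/2) N := by
  set M := l + 4 with hM
  rw [hahnQ_eq_ext (l+2) x N (M := M) (by omega), hahnQ_eq_ext (l+1) x N (by omega : l+1+1 ≤ M),
      hahnQ_eq_ext l x N (by omega : l+1 ≤ M)]
  set g : ℕ → ℝ := fun k => match k with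
    | 0 => 0
    | (j+1) => cc N (l+1) j * poch (-x) (j+1) with hg
  have hshift : ∑ k ∈ Finset.range M, cc N (l+1) k * poch (-x) (k+1)
      = ∑ k ∈ Finset.range M, g k := by
    have h1 : ∑ k ∈ Finset.range (M+1), g k
        = (∑ k ∈ Finset.range M, g (k+1)) + g 0 := Finset.sum_range_succ' g M
    have h2 : ∑ k ∈ Finset.range (M+1), g k
        = (∑ k ∈ Finset.range M, g k) + g M := Finset.sum_range_succ g M
    have h3 : g M = 0 := by
      show cc N (l+1) (l+3) * poch (-x) (l+4) = 0
      rw [cc_eq_zero (by omega)]; ring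
    have h4 : g 0 = (0:ℝ) := rfl
    have h5 : ∀ k, g (k+1) = cc N (l+1) k * poch (-x) (k+1) := fun k => rfl
    calc ∑ k ∈ Finset.range M, cc N (l+1) k * poch (-x) (k+1)
        = ∑ k ∈ Finset.range M, g (k+1) := by
          apply Finset.sum_congr rfl; intro k _; rw [h5]
      _ = ∑ k ∈ Finset.range M, g k := by
          rw [h3] at h2; rw [h4] at h1; linarith [h1.symm.trans h2]
  have hsplit : ((N:ℝ)/2 - x) * ∑ k ∈ Finset.range M, cc N (l+1) k * poch (-x) k
      = (∑ k ∈ Finset.range M, ((N:ℝ)/2 - (k:ℝ)) * cc N (l+1) k * poch (-x) k)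
        + ∑ k ∈ Finset.range M, g k := by
    rw [← hshift, Finset.mul_sum, ← Finset.sum_add_distrib]
    apply Finset.sum_congr rfl
    intro k _
    rw [poch_succ (-x) k]
    ring
  calc ((l:ℝ)+3)*((N:ℝ)-((l:ℝ)+1)) * ∑ k ∈ Finset.range M, cc N (l+2) k * poch (-x) k
      = ∑ k ∈ Finset.range M, ((l:ℝ)+3)*((N:ℝ)-((l:ℝ)+1)) * (cc N (l+2) k * poch (-x) k) := by
        rw [Finset.mul_sum]
    _ = ∑ k ∈ Finset.range M,
          (4*((l:ℝ)+2) * (((N:ℝ)/2 - (k:ℝ)) * cc N (l+1) k * poch (-x) k + g k)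
            - ((l:ℝ)+1)*((N:ℝ)+(l:ℝ)+3) * (cc N l k * poch (-x) k)) := by
        apply Finset.sum_congr rfl
        intro k hk
        match k with
        | 0 =>
          have : g 0 = (0:ℝ) := rfl
          rw [this, cc_zero, cc_zero, cc_zero, poch_zero]
          push_cast
          ring
        | (j+1) =>
          have hgk : g (j+1) = cc N (l+1) j * poch (-x) (j+1) := rfl
          have hjN : j + 1 ≤ N := by
            have := Finset.mem_range.mp hk
            omega
          rw [hgk]
          push_cast
          linear_combination poch (-x) (j+1) * key N l j hjN
    _ = 4*((l:ℝ)+2)*((N:ℝ)/2 - x) * (∑ k ∈ Finset.range M, cc N (l+1) k * poch (-x) k)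
        - ((l:ℝ)+1)*((N:ℝ)+(l:ℝ)+3) * ∑ k ∈ Finset.range M, cc N l k * poch (-x) k := by
        rw [Finset.sum_sub_distrib, ← Finset.mul_sum, ← Finset.mul_sum,
            Finset.sum_add_distrib, ← hsplit]
        ring

/-- one-step descent of the Lyapunov quadratic form -/
lemma step (A C t u v w : ℝ) (hA : 0 < A) (hC : 0 ≤ C) (hCA : C ≤ A)
    (hrec : A * w = t * v - C * u) :
    w^2 - 2*(t/(A+C))*w*v + v^2 ≤ v^2 - 2*(t/(A+C))*v*u + u^2 := by
  have hACpos : (0:ℝ) < A + C := by linarith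
  have hAne : A ≠ 0 := ne_of_gt hA
  have hACne : A + C ≠ 0 := ne_of_gt hACpos
  have hw : w = (t*v - C*u)/A := by field_simp; linarith [hrec]
  have hkey : (v^2 - 2*(t/(A+C))*v*u + u^2) - (w^2 - 2*(t/(A+C))*w*v + v^2)
      = (A-C)*(A+C)*(t*v-(A+C)*u)^2/(A^2*(A+C)^2) := by
    rw [hw]; field_simp; ring
  have hpos : 0 ≤ (A-C)*(A+C)*(t*v-(A+C)*u)^2/(A^2*(A+C)^2) := by
    apply div_nonneg _ (by positivity)
    exact mul_nonneg (mul_nonneg (by linarith) (le_of_lt hACpos)) (sq_nonneg _)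
  linarith [hkey, hpos]

/-- from the quadratic form bound extract the pointwise bound -/
lemma quad_bound (τ u v : ℝ) (ht : τ^2 ≤ 1) (hu : u^2 ≤ 1)
    (hI : v^2 - 2*τ*v*u + u^2 ≤ 1 - τ^2) : v^2 ≤ 1 := by
  have hvu : (v - τ*u)^2 ≤ (1-τ^2)*(1-u^2) := by nlinarith
  rcases eq_or_lt_of_le ht with h1 | h1
  · have h2 : (v - τ*u)^2 ≤ 0 := by nlinarith
    have h3 : v = τ*u := by nlinarith [sq_nonneg (v - τ*u)]
    rw [h3]
    nlinarith
  · have h1' : (0:ℝ) < 1 - τ^2 := by linarith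
    have hkey : (1-τ^2)*(1-v^2)
        = ((1-τ^2)*(1-u^2) - (v-τ*u)^2) + ((1-τ^2)*u - τ*(v-τ*u))^2 := by ring
    nlinarith [sq_nonneg ((1-τ^2)*u - τ*(v-τ*u))]

lemma hahnQ_zero (x : ℝ) (N : ℕ) : hahnQ 0 x (1/2) (1/2) N = 1 := by
  simp [hahnQ, poch_zero]

lemma poch_one (a : ℝ) : poch a 1 = a := by
  have := poch_succ a 0
  rw [poch_zero] at this
  simpa using this

lemma hahnQ_one (x : ℝ) (N : ℕ) (hN : 0 < N) : hahnQ 1 x (1/2) (1/2) N = 1 - 2*x/N := by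
  have hNne : (N:ℝ) ≠ 0 := by positivity
  unfold hahnQ
  rw [Finset.sum_range_succ, Finset.sum_range_one]
  simp only [poch_zero, poch_one]
  norm_num
  field_simp
  ring

theorem discrete_chebyshevU_bound (N : ℕ) (hN : 0 < N) (n : ℕ)
    (hn : (n : ℝ) ≤ Real.sqrt ((N : ℝ) + 1)) (x : ℝ) (hx : x ∈ Set.Icc (0 : ℝ) N) :
    |hahnQ n x (1 / 2) (1 / 2) N| ≤ 1 := by
  obtain ⟨hx0, hxN⟩ := hx
  have hNR : (0:ℝ) < N := by exact_mod_cast hN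
  set q : ℕ → ℝ := fun k => hahnQ k x (1/2) (1/2) N with hq
  set τ : ℝ := 1 - 2*x/N with hτdef
  have hn2 : (n:ℝ)^2 ≤ (N:ℝ) + 1 := by
    have h0 : (0:ℝ) ≤ (N:ℝ)+1 := by positivity
    nlinarith [Real.sq_sqrt h0, Real.sqrt_nonneg ((N:ℝ)+1)]
  have hτ2 : τ^2 ≤ 1 := by
    have h1 : 2*x/N ≤ 2 := by rw [div_le_iff₀ hNR]; linarith
    have h2 : 0 ≤ 2*x/N := by positivity
    rw [hτdef]; nlinarith
  have main : ∀ k : ℕ, (k ≤ n → q k ^ 2 ≤ 1) ∧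
      (1 ≤ k → k ≤ n → q k ^2 - 2*τ*(q k)*(q (k-1)) + q (k-1)^2 ≤ 1 - τ^2) := by
    intro k
    induction k using Nat.strong_induction_on with
    | _ k ih =>
      obtain _ | k := k
      · refine ⟨fun _ => ?_, fun h => absurd h (by omega)⟩
        have h0 : q 0 = 1 := hahnQ_zero x N
        rw [h0]; norm_num
      obtain _ | m := k
      · have h0 : q 0 = 1 := hahnQ_zero x N
        have h1 : q 1 = τ := by
          show hahnQ 1 x (1/2) (1/2) N = τ
          rw [hahnQ_one x N hN, hτdef]
        refine ⟨fun _ => ?_, fun _ _ => ?_⟩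
        · rw [h1]; exact hτ2
        · show q 1 ^2 - 2*τ*(q 1)*(q 0) + q 0 ^2 ≤ 1 - τ^2
          rw [h0, h1]; nlinarith [sq_nonneg τ]
      · -- k = m + 2
        have key : m + 2 ≤ n → q (m+2) ^2 - 2*τ*(q (m+2))*(q (m+1)) + q (m+1)^2 ≤ 1 - τ^2
            ∧ q (m+2) ^2 ≤ 1 := by
          intro hkn
          have ihm := ih (m+1) (by omega)
          have hq1 : q (m+1) ^ 2 ≤ 1 := ihm.1 (by omega)
          have hI1 : q (m+1) ^2 - 2*τ*(q (m+1))*(q m) + q m ^2 ≤ 1 - τ^2 := by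
            have := ihm.2 (by omega) (by omega)
            simpa using this
          -- arithmetic facts
          have hmn : ((m:ℝ)+2)^2 ≤ (N:ℝ)+1 := by
            have : ((m+2:ℕ):ℝ) ≤ (n:ℝ) := by exact_mod_cast hkn
            push_cast at this
            nlinarith [hn2, (by positivity : (0:ℝ) ≤ (n:ℝ))]
          have hm3N : (m:ℝ)+3 ≤ (N:ℝ) := by nlinarith [sq_nonneg ((m:ℝ)+1), (by positivity : (0:ℝ) ≤ (m:ℝ))]
          have hm3N' : m + 3 ≤ N := by exact_mod_cast (by push_cast; linarith : ((m+3:ℕ):ℝ) ≤ (N:ℝ))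
          -- the recurrence, scaled
          have hrec0 := hahn_rec N m x hm3N'
          set A : ℝ := ((m:ℝ)+3)*((N:ℝ)-((m:ℝ)+1)) with hA
          set C : ℝ := ((m:ℝ)+1)*((N:ℝ)+(m:ℝ)+3) with hC
          set t : ℝ := 4*((m:ℝ)+2)*((N:ℝ)/2 - x) with ht
          have hrec : A * q (m+2) = t * q (m+1) - C * q m := by
            show A * hahnQ (m+2) x (1/2) (1/2) N
              = t * hahnQ (m+1) x (1/2) (1/2) N - C * hahnQ m x (1/2) (1/2) N
            rw [hA, hC, ht]
            linear_combination hrec0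
          have hApos : 0 < A := by
            rw [hA]; apply mul_pos (by positivity); linarith
          have hCpos : 0 ≤ C := by
            rw [hC]
            apply mul_nonneg (by positivity)
            have : (0:ℝ) ≤ (m:ℝ) := by positivity
            linarith
          have hCA : C ≤ A := by
            rw [hA, hC]; nlinarith [hmn]
          have hsum : A + C = 2*(N:ℝ)*((m:ℝ)+2) := by rw [hA, hC]; ring
          have hACτ : t/(A+C) = τ := by
            rw [hsum, ht, hτdef]
            have hNne : (N:ℝ) ≠ 0 := ne_of_gt hNR
            have hmne : ((m:ℝ)+2) ≠ 0 := by positivity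
            field_simp
            ring
          have hstep := step A C t (q m) (q (m+1)) (q (m+2)) hApos hCpos hCA hrec
          rw [hACτ] at hstep
          have hI2 : q (m+2) ^2 - 2*τ*(q (m+2))*(q (m+1)) + q (m+1)^2 ≤ 1 - τ^2 := by
            linarith [hstep, hI1]
          exact ⟨hI2, quad_bound τ (q (m+1)) (q (m+2)) hτ2 hq1 hI2⟩
        refine ⟨fun hkn => (key hkn).2, fun _ hkn => ?_⟩
        show q (m+2) ^2 - 2*τ*(q (m+2))*(q (m+1)) + q (m+1)^2 ≤ 1 - τ^2
        exact (key hkn).1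
  have hfin : q n ^ 2 ≤ 1 := (main n).1 (le_refl n)
  show |q n| ≤ 1
  apply abs_le.mpr
  constructor
  · nlinarith [sq_nonneg (q n + 1)]
  · nlinarith [sq_nonneg (q n - 1)]
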